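/- Let k ≥ 1 be an integer, λ > 0, and a ≥ 0. Then for every real u, exp(-kλa(1 - (1/k)∑_{j=1}^k u^j)) = ∑_{n=0}^∞ u^n · e^{-kλa} · c_k(n, λa). In particular, the probability mass function of the homogeneous Poisson field of order k evaluated on a Borel set A of measure a is P(X^k(A) = n) = e^{-kλa} c_k(n, λa). -/

import Mathlib

open scoped BigOperators

/-- `Omega k n` is the (finite) set of tuples `(x₁,…,x_k)` of non-negative integers with
`x₁ + 2·x₂ + ⋯ + k·x_k = n`. -/
def Omega (k n : ℕ) : Finset (Fin k → ℕ) :=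
  (Fintype.piFinset fun _ => Finset.range (n + 1)).filter
    (fun x => ∑ i, (i.1 + 1) * x i = n)

/-- `ζ(x) = x₁ + ⋯ + x_k`. -/
def zeta {k : ℕ} (x : Fin k → ℕ) : ℕ := ∑ i, x i

/-- `Π!(x) = x₁! ⋯ x_k!`. -/
def pifact {k : ℕ} (x : Fin k → ℕ) : ℕ := ∏ i, (x i).factorial

/-- `c_k(n, y) = ∑_{x ∈ Ω(k,n)} y^{ζ(x)} / Π!(x)`. -/
noncomputable def ck (k n : ℕ) (y : ℝ) : ℝ :=
  ∑ x ∈ Omega k n, y ^ zeta x / (pifact x : ℝ)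

/-- Every tuple belongs to `Omega k` of its weighted sum. -/
lemma mem_Omega_self {k : ℕ} (x : Fin k → ℕ) :
    x ∈ Omega k (∑ i, (i.1 + 1) * x i) := by
  refine Finset.mem_filter.mpr ⟨Fintype.mem_piFinset.mpr fun i => ?_, rfl⟩
  refine Finset.mem_range.mpr (Nat.lt_succ_of_le ?_)
  calc x i ≤ (i.1 + 1) * x i := Nat.le_mul_of_pos_left _ (Nat.succ_pos _)
    _ ≤ ∑ j, (j.1 + 1) * x j := Finset.single_le_sum
        (f := fun j : Fin k => (j.1 + 1) * x j) (fun _ _ => Nat.zero_le _)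
        (Finset.mem_univ i)

/-- The equivalence between all tuples and the disjoint union of the `Omega k n`. -/
def omegaEquiv (k : ℕ) : (Fin k → ℕ) ≃ Σ n : ℕ, {x // x ∈ Omega k n} where
  toFun x := ⟨∑ i, (i.1 + 1) * x i, ⟨x, mem_Omega_self x⟩⟩
  invFun p := p.2.1
  left_inv x := rfl
  right_inv := by
    rintro ⟨n, x, hx⟩
    have h : ∑ i, (i.1 + 1) * x i = n := (Finset.mem_filter.mp hx).2
    subst h
    rfl

/-- Finite product of absolutely convergent series. -/
lemma prod_tsum_aux : ∀ (k : ℕ) (f : Fin k → ℕ → ℝ),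
    (∀ i, Summable fun m => ‖f i m‖) →
    Summable (fun x : Fin k → ℕ => ‖∏ i, f i (x i)‖) ∧
    (∏ i, ∑' m, f i m) = ∑' x : Fin k → ℕ, ∏ i, f i (x i) := by
  intro k
  induction k with
  | zero =>
    intro f _
    constructor
    · exact Summable.of_finite
    · simp only [Finset.univ_eq_empty, Finset.prod_empty]
      exact (tsum_eq_single (f := fun _ : Fin 0 → ℕ => (1 : ℝ)) (fun _ => 0)
        fun b hb => absurd (Subsingleton.elim b _) hb).symm
  | succ k ih =>
    intro f hf
    obtain ⟨hsum, heq⟩ := ih (fun i => f i.succ) (fun i => hf i.succ)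
    set e : (Fin (k + 1) → ℕ) ≃ ℕ × (Fin k → ℕ) := (Fin.consEquiv fun _ : Fin (k + 1) => ℕ).symm
    have hfun : ∀ x : Fin (k + 1) → ℕ,
        ∏ i, f i (x i) = f 0 (x 0) * ∏ i : Fin k, f i.succ (x i.succ) := by
      intro x
      exact Fin.prod_univ_succ fun i => f i (x i)
    have hprodsum : Summable fun z : ℕ × (Fin k → ℕ) =>
        ‖f 0 z.1 * ∏ i : Fin k, f i.succ (z.2 i)‖ :=
      Summable.mul_norm (f := f 0)
        (g := fun y : Fin k → ℕ => ∏ i : Fin k, f i.succ (y i)) (hf 0) hsum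
    have hcomp : (fun z : ℕ × (Fin k → ℕ) =>
        ‖f 0 z.1 * ∏ i : Fin k, f i.succ (z.2 i)‖) ∘ e =
        fun x : Fin (k + 1) → ℕ => ‖∏ i, f i (x i)‖ := by
      funext x
      simp [hfun x, e, Fin.consEquiv]
      exact Or.inl rfl
    constructor
    · have := (e.summable_iff (f := fun z : ℕ × (Fin k → ℕ) =>
        ‖f 0 z.1 * ∏ i : Fin k, f i.succ (z.2 i)‖)).mpr hprodsum
      rwa [hcomp] at this
    · rw [Fin.prod_univ_succ, heq,
        tsum_mul_tsum_of_summable_norm (hf 0) hsum]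
      rw [← e.tsum_eq (f := fun z : ℕ × (Fin k → ℕ) =>
        f 0 z.1 * ∏ i : Fin k, f i.succ (z.2 i))]
      refine tsum_congr fun x => ?_
      simp [hfun x, e, Fin.consEquiv]
      exact Or.inl rfl

theorem pgf_homogeneous_poisson_field_of_order_k
    (k : ℕ) (hk : 1 ≤ k) (lam a : ℝ) (hlam : 0 < lam) (ha : 0 ≤ a) (u : ℝ) :
    Real.exp (-(k * lam * a) * (1 - (1 / k) * ∑ j ∈ Finset.range k, u ^ (j + 1))) =
      ∑' n : ℕ, u ^ n * Real.exp (-(k * lam * a)) * ck k n (lam * a) := by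
  set t : ℝ := lam * a with ht
  have hk0 : (k : ℝ) ≠ 0 := Nat.cast_ne_zero.mpr (by omega)
  -- rewrite the exponent
  have hexp : -(k * lam * a) * (1 - (1 / k) * ∑ j ∈ Finset.range k, u ^ (j + 1)) =
      -(k * lam * a) + ∑ j ∈ Finset.range k, t * u ^ (j + 1) := by
    set S := ∑ j ∈ Finset.range k, u ^ (j + 1) with hS
    have h2 : ∑ j ∈ Finset.range k, t * u ^ (j + 1) = t * S := by
      rw [hS, Finset.mul_sum]
    rw [h2, ht]
    field_simp
    ring
  rw [hexp, Real.exp_add, Real.exp_sum]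
  -- each factor is a tsum
  have hfactor : ∀ j : ℕ, Real.exp (t * u ^ (j + 1)) =
      ∑' m : ℕ, (t * u ^ (j + 1)) ^ m / m.factorial := by
    intro j
    rw [Real.exp_eq_exp_ℝ, NormedSpace.exp_eq_tsum_div]
  -- set up the product of series
  set f : Fin k → ℕ → ℝ := fun i m => (t * u ^ (i.1 + 1)) ^ m / m.factorial with hfdef
  have hfs : ∀ i : Fin k, Summable fun m => ‖f i m‖ := by
    intro i
    have := Real.summable_pow_div_factorial |t * u ^ (i.1 + 1)|
    refine this.congr fun m => ?_
    simp [hfdef, abs_mul, abs_div, abs_pow]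
  obtain ⟨hsum, heq⟩ := prod_tsum_aux k f hfs
  have hprod : ∑ j ∈ Finset.range k, Real.exp (t * u ^ (j + 1)) =
      ∑ j ∈ Finset.range k, Real.exp (t * u ^ (j + 1)) := rfl
  have hprodexp : ∏ i : Fin k, Real.exp (t * u ^ (i.1 + 1)) =
      ∑' x : Fin k → ℕ, ∏ i, f i (x i) := by
    rw [← heq]
    exact Finset.prod_congr rfl fun i _ => hfactor i.1
  have hrange : ∑ j ∈ Finset.range k, Real.exp (t * u ^ (j + 1)) =
      ∑ j ∈ Finset.range k, Real.exp (t * u ^ (j + 1)) := rfl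
  -- value of the product on a tuple in `Omega k n`
  have hval : ∀ (n : ℕ) (x : Fin k → ℕ), x ∈ Omega k n →
      ∏ i, f i (x i) = u ^ n * (t ^ zeta x / (pifact x : ℝ)) := by
    intro n x hx
    have hn : ∑ i, (i.1 + 1) * x i = n := (Finset.mem_filter.mp hx).2
    have : ∏ i, f i (x i) =
        (∏ i, t ^ x i * u ^ ((i.1 + 1) * x i)) / ∏ i, ((x i).factorial : ℝ) := by
      rw [← Finset.prod_div_distrib]
      refine Finset.prod_congr rfl fun i _ => ?_
      simp [hfdef, mul_pow, ← pow_mul, mul_comm]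
    rw [this, Finset.prod_mul_distrib, Finset.prod_pow_eq_pow_sum,
      Finset.prod_pow_eq_pow_sum, hn]
    have hpf : ((pifact x : ℕ) : ℝ) = ∏ i, ((x i).factorial : ℝ) := by
      simp [pifact]
    rw [zeta, hpf]
    ring
  -- regroup the tsum over tuples by weighted sum
  have hsummable : Summable fun x : Fin k → ℕ => ∏ i, f i (x i) := hsum.of_norm
  have hsig : Summable (fun p : Σ n : ℕ, {x // x ∈ Omega k n} => ∏ i, f i (p.2.1 i)) :=
    ((omegaEquiv k).summable_iff
      (f := fun p : Σ n : ℕ, {x // x ∈ Omega k n} => ∏ i, f i (p.2.1 i))).mp hsummable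
  have hregroup : ∑' x : Fin k → ℕ, ∏ i, f i (x i) =
      ∑' n : ℕ, ∑' x : {x // x ∈ Omega k n}, ∏ i, f i (x.1 i) := by
    calc ∑' x : Fin k → ℕ, ∏ i, f i (x i)
        = ∑' p : Σ n : ℕ, {x // x ∈ Omega k n}, ∏ i, f i (p.2.1 i) :=
          (omegaEquiv k).tsum_eq (f := fun p : Σ n : ℕ, {x // x ∈ Omega k n} =>
            ∏ i, f i (p.2.1 i))
      _ = ∑' n : ℕ, ∑' x : {x // x ∈ Omega k n}, ∏ i, f i (x.1 i) :=
          hsig.tsum_sigma' (fun n => Summable.of_finite)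
  have hinner : ∀ n : ℕ, (∑' x : {x // x ∈ Omega k n}, ∏ i, f i (x.1 i)) =
      u ^ n * ck k n t := by
    intro n
    rw [Finset.tsum_subtype (Omega k n) (fun x => ∏ i, f i (x i)), ck,
      Finset.mul_sum]
    exact Finset.sum_congr rfl fun x hx => hval n x hx
  calc Real.exp (-(↑k * lam * a)) * ∏ i ∈ Finset.range k, Real.exp (t * u ^ (i + 1))
      = Real.exp (-(↑k * lam * a)) * ∏ i : Fin k, Real.exp (t * u ^ (i.1 + 1)) := by
        rw [Finset.prod_range fun j => Real.exp (t * u ^ (j + 1))]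
    _ = Real.exp (-(↑k * lam * a)) * ∑' n : ℕ, u ^ n * ck k n t := by
        rw [hprodexp, hregroup, tsum_congr hinner]
    _ = ∑' n : ℕ, u ^ n * Real.exp (-(↑k * lam * a)) * ck k n t := by
        rw [← tsum_mul_left]
        exact tsum_congr fun n => by ring
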